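/- Let R be a Dedekind domain (not a field) such that R/I is finite for every nonzero ideal I, with norm |I| = #(R/I), and let ω(H) denote the number of distinct prime ideal divisors of a nonzero ideal H. Let Q' be a nonzero ideal with prime factorization Q' = P_1^{ν_1} ⋯ P_k^{ν_k} (P_1, …, P_k distinct prime ideals). Then ∑_{H_1 ∣ Q'} ∑_{H_2 ∣ Q'} 2^{ω(H_1 ∩ H_2)} / |H_1 ∩ H_2| ≤ ∏_{i=1}^{k} (1 + ∑_{ν=1}^{∞} (4ν + 2)/|P_i|^ν), where the sums over H_1, H_2 run over all ideal divisors of Q' (including R itself). -/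

import Mathlib

open scoped Classical

open Finset

noncomputable def stmt11GridTerm (q : ℝ) (m : ℕ) : ℝ := (if m = 0 then 1 else 2) / q ^ m

lemma stmt11_gridTerm_nonneg {q : ℝ} (hq : 0 < q) (m : ℕ) : 0 ≤ stmt11GridTerm q m := by
  unfold stmt11GridTerm; positivity

lemma stmt11_grid_sum_eq (q : ℝ) (hq : 2 ≤ q) (ν : ℕ) :
    ∑ a ∈ range (ν + 1), ∑ b ∈ range (ν + 1), stmt11GridTerm q (max a b)
      = 1 + ∑ n ∈ range ν, (4 * ((n : ℝ) + 1) + 2) / q ^ (n + 1) := by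
  have hq0 : (0:ℝ) < q := lt_of_lt_of_le two_pos hq
  induction ν with
  | zero => simp [stmt11GridTerm]
  | succ ν ih =>
      rw [Finset.sum_range_succ]
      have hinner : ∀ a ∈ range (ν + 1),
          ∑ b ∈ range (ν + 1 + 1), stmt11GridTerm q (max a b)
            = (∑ b ∈ range (ν + 1), stmt11GridTerm q (max a b)) + 2 / q ^ (ν + 1) := by
        intro a ha
        rw [Finset.sum_range_succ]
        congr 1
        have : max a (ν + 1) = ν + 1 := max_eq_right (by have := mem_range.mp ha; omega)
        rw [this]; simp [stmt11GridTerm]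
      rw [Finset.sum_congr rfl hinner, Finset.sum_add_distrib, ih, Finset.sum_const,
        Finset.card_range]
      have hrow : ∑ b ∈ range (ν + 1 + 1), stmt11GridTerm q (max (ν + 1) b)
          = (ν + 1 : ℝ) * (2 / q ^ (ν + 1)) + 2 / q ^ (ν + 1) := by
        rw [Finset.sum_range_succ]
        congr 1
        · have : ∀ b ∈ range (ν + 1), stmt11GridTerm q (max (ν + 1) b) = 2 / q ^ (ν + 1) := by
            intro b hb
            have : max (ν + 1) b = ν + 1 := max_eq_left (by have := mem_range.mp hb; omega)
            rw [this]; simp [stmt11GridTerm]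
          rw [Finset.sum_congr rfl this, Finset.sum_const, Finset.card_range, nsmul_eq_mul]
          push_cast; ring
        · simp [stmt11GridTerm]
      rw [hrow, Finset.sum_range_succ]
      push_cast
      ring

lemma stmt11_summable_tail {q : ℝ} (hq : 2 ≤ q) :
    Summable (fun n : ℕ => (4 * ((n : ℝ) + 1) + 2) / q ^ (n + 1)) := by
  have hq0 : (0:ℝ) < q := lt_of_lt_of_le two_pos hq
  have hr : ‖(1/q : ℝ)‖ < 1 := by
    rw [Real.norm_eq_abs, abs_of_pos (by positivity)]
    rw [div_lt_one hq0]; linarith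
  have h1 : Summable (fun n : ℕ => (n : ℝ) * (1/q) ^ n) := by
    simpa using summable_pow_mul_geometric_of_norm_lt_one 1 hr
  have h2 : Summable (fun n : ℕ => ((n : ℝ) + 1) * (1/q) ^ (n + 1)) := by
    have := (summable_nat_add_iff 1).mpr h1
    refine this.congr fun n => ?_
    push_cast; ring
  have h3 : Summable (fun n : ℕ => (1/q : ℝ) ^ (n + 1)) := by
    have hg : Summable (fun n : ℕ => (1/q : ℝ) ^ n) := summable_geometric_of_norm_lt_one hr
    have := (summable_nat_add_iff 1).mpr hg
    simpa using this
  have := (h2.mul_left 4).add (h3.mul_left 2)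
  refine this.congr fun n => ?_
  field_simp
  rw [← mul_pow, one_div_mul_cancel hq0.ne', one_pow]

lemma stmt11_grid_sum_le (q : ℝ) (hq : 2 ≤ q) (ν : ℕ) :
    ∑ a ∈ range (ν + 1), ∑ b ∈ range (ν + 1), stmt11GridTerm q (max a b)
      ≤ 1 + ∑' n : ℕ, (4 * ((n : ℝ) + 1) + 2) / q ^ (n + 1) := by
  rw [stmt11_grid_sum_eq q hq ν]
  have hq0 : (0:ℝ) < q := lt_of_lt_of_le two_pos hq
  gcongr
  exact Summable.sum_le_tsum (range ν) (fun n _ => by positivity) (stmt11_summable_tail hq)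

section Alg

variable {R : Type*} [CommRing R] [IsDedekindDomain R] {k : ℕ} {P : Fin k → Ideal R}

lemma stmt11_prime (hPprime : ∀ i, (P i).IsPrime ∧ P i ≠ ⊥) (i : Fin k) : Prime (P i) :=
  Ideal.prime_of_isPrime (hPprime i).2 (hPprime i).1

lemma stmt11_coprime (hPprime : ∀ i, (P i).IsPrime ∧ P i ≠ ⊥)
    (hPinj : Function.Injective P) {i j : Fin k} (h : i ≠ j) : IsCoprime (P i) (P j) := by
  rw [Ideal.isCoprime_iff_sup_eq]
  exact Ideal.IsMaximal.coprime_of_ne ((hPprime i).1.isMaximal (hPprime i).2)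
    ((hPprime j).1.isMaximal (hPprime j).2) (fun hE => h (hPinj hE))

lemma stmt11_pow_dvd (hPprime : ∀ i, (P i).IsPrime ∧ P i ≠ ⊥)
    (hPinj : Function.Injective P) (a : Fin k → ℕ) (i : Fin k) (m : ℕ) :
    P i ^ m ∣ (∏ j, P j ^ a j) ↔ m ≤ a i := by
  constructor
  · intro h
    rw [← Finset.mul_prod_erase Finset.univ _ (Finset.mem_univ i)] at h
    have hcop : IsCoprime (P i ^ m) (∏ j ∈ Finset.univ.erase i, P j ^ a j) :=
      IsCoprime.prod_right fun j hj =>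
        (stmt11_coprime hPprime hPinj
          (fun hE => (Finset.mem_erase.mp hj).1 hE.symm)).pow
    have := hcop.dvd_of_dvd_mul_right h
    rwa [pow_dvd_pow_iff (stmt11_prime hPprime i).ne_zero
      (stmt11_prime hPprime i).not_unit] at this
  · intro h
    exact dvd_trans (pow_dvd_pow _ h)
      (Finset.dvd_prod_of_mem (fun j => P j ^ a j) (Finset.mem_univ i))

lemma stmt11_inj (hPprime : ∀ i, (P i).IsPrime ∧ P i ≠ ⊥)
    (hPinj : Function.Injective P) {a b : Fin k → ℕ}
    (h : ∏ j, P j ^ a j = ∏ j, P j ^ b j) : a = b := by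
  funext i
  have h1 : a i ≤ b i := by
    rw [← stmt11_pow_dvd hPprime hPinj b i, ← h]
    exact Finset.dvd_prod_of_mem (fun j => P j ^ a j) (Finset.mem_univ i)
  have h2 : b i ≤ a i := by
    rw [← stmt11_pow_dvd hPprime hPinj a i, h]
    exact Finset.dvd_prod_of_mem (fun j => P j ^ b j) (Finset.mem_univ i)
  omega

lemma stmt11_div_aux (hPprime : ∀ i, (P i).IsPrime ∧ P i ≠ ⊥) (νf : Fin k → ℕ)
    (s : Finset (Fin k)) :
    ∀ N : Ideal R, N ∣ ∏ j ∈ s, P j ^ νf j →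
      ∃ a : Fin k → ℕ, (∀ i, a i ≤ νf i) ∧ N = ∏ j ∈ s, P j ^ a j := by
  classical
  induction s using Finset.induction_on with
  | empty =>
      intro N hN
      rw [Finset.prod_empty] at hN
      refine ⟨fun _ => 0, fun i => Nat.zero_le _, ?_⟩
      rw [Finset.prod_empty]
      exact isUnit_iff_eq_one.mp (isUnit_of_dvd_one hN)
  | insert _ _ hi ih =>
      rename_i i s
      intro N hN
      rw [Finset.prod_insert hi] at hN
      obtain ⟨d₁, d₂, hd₁, hd₂, rfl⟩ := exists_dvd_and_dvd_of_dvd_mul hN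
      obtain ⟨c, hc, hassoc⟩ := (dvd_prime_pow (stmt11_prime hPprime i) _).mp hd₁
      have hd1eq : d₁ = P i ^ c := associated_iff_eq.mp hassoc
      obtain ⟨a, ha, rfl⟩ := ih d₂ hd₂
      refine ⟨Function.update a i c, ?_, ?_⟩
      · intro j
        rcases eq_or_ne j i with rfl | hji
        · rwa [Function.update_self]
        · rw [Function.update_of_ne hji]; exact ha j
      · rw [Finset.prod_insert hi, Function.update_self, hd1eq]
        congr 1
        refine Finset.prod_congr rfl fun j hj => ?_
        rw [Function.update_of_ne (fun hE => hi (by rwa [← hE]))]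

lemma stmt11_inf (hPprime : ∀ i, (P i).IsPrime ∧ P i ≠ ⊥)
    (hPinj : Function.Injective P) (a b : Fin k → ℕ) :
    (∏ j, P j ^ a j) ⊓ (∏ j, P j ^ b j) = ∏ j, P j ^ (max (a j) (b j)) := by
  apply le_antisymm
  · rw [← Ideal.dvd_iff_le]
    refine Fintype.prod_dvd_of_coprime ?_ ?_
    · intro i j hij
      exact (stmt11_coprime hPprime hPinj hij).pow
    · intro i
      rcases le_total (a i) (b i) with h | h
      · rw [max_eq_right h]
        exact dvd_trans (Finset.dvd_prod_of_mem (fun j => P j ^ b j) (Finset.mem_univ i))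
          (Ideal.dvd_iff_le.mpr inf_le_right)
      · rw [max_eq_left h]
        exact dvd_trans (Finset.dvd_prod_of_mem (fun j => P j ^ a j) (Finset.mem_univ i))
          (Ideal.dvd_iff_le.mpr inf_le_left)
  · refine le_inf (Ideal.dvd_iff_le.mp ?_) (Ideal.dvd_iff_le.mp ?_)
    · exact Finset.prod_dvd_prod_of_dvd _ _ fun j _ => pow_dvd_pow _ (le_max_left _ _)
    · exact Finset.prod_dvd_prod_of_dvd _ _ fun j _ => pow_dvd_pow _ (le_max_right _ _)

lemma stmt11_card_aux (hPprime : ∀ i, (P i).IsPrime ∧ P i ≠ ⊥)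
    (hPinj : Function.Injective P) (m : Fin k → ℕ) (s : Finset (Fin k)) :
    Submodule.cardQuot (∏ j ∈ s, P j ^ m j) = ∏ j ∈ s, Submodule.cardQuot (P j) ^ m j := by
  classical
  induction s using Finset.induction_on with
  | empty => simpa using Submodule.cardQuot_top R R
  | insert _ _ hi ih =>
      rename_i i s
      rw [Finset.prod_insert hi, Finset.prod_insert hi]
      have hcop : IsCoprime (P i ^ m i) (∏ j ∈ s, P j ^ m j) :=
        IsCoprime.prod_right fun j hj =>
          (stmt11_coprime hPprime hPinj (fun hE => hi (by rwa [hE]))).pow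
      rw [cardQuot_mul_of_coprime hcop, ih]
      congr 1
      exact @cardQuot_pow_of_prime R _ (P i) (hPprime i).1 _ (hPprime i).2 (m i)

lemma stmt11_omega (hPprime : ∀ i, (P i).IsPrime ∧ P i ≠ ⊥)
    (hPinj : Function.Injective P) (m : Fin k → ℕ) :
    Nat.card {P' : Ideal R // P'.IsPrime ∧ P' ∣ ∏ j, P j ^ m j}
      = (Finset.univ.filter fun i => m i ≠ 0).card := by
  classical
  have hprodne : (∏ j, P j ^ m j) ≠ 0 :=
    Finset.prod_ne_zero_iff.mpr fun j _ =>
      pow_ne_zero _ (stmt11_prime hPprime j).ne_zero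
  have hbij : Function.Bijective
      (fun i : {i : Fin k // m i ≠ 0} =>
        (⟨P i.1, (hPprime i.1).1,
          dvd_trans (dvd_pow_self (P i.1) i.2)
            (Finset.dvd_prod_of_mem (fun j => P j ^ m j) (Finset.mem_univ i.1))⟩ :
          {P' : Ideal R // P'.IsPrime ∧ P' ∣ ∏ j, P j ^ m j})) := by
    constructor
    · intro x y hxy
      exact Subtype.ext (hPinj (congrArg Subtype.val hxy))
    · rintro ⟨P', hP', hdvd⟩
      have hP'ne : P' ≠ ⊥ := by
        rintro rfl
        exact hprodne (zero_dvd_iff.mp hdvd)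
      have hP'prime : Prime P' := Ideal.prime_of_isPrime hP'ne hP'
      obtain ⟨j, -, hj⟩ := (Prime.dvd_finset_prod_iff hP'prime _).mp hdvd
      have hmj : m j ≠ 0 := by
        rintro h0
        rw [h0, pow_zero] at hj
        exact hP'prime.not_unit (isUnit_of_dvd_one hj)
      have hle : P j ≤ P' := Ideal.le_of_dvd (hP'prime.dvd_of_dvd_pow hj)
      have : P' = P j :=
        (((hPprime j).1.isMaximal (hPprime j).2).eq_of_le hP'.ne_top hle).symm
      exact ⟨⟨j, hmj⟩, Subtype.ext this.symm⟩
  rw [← Nat.card_congr (Equiv.ofBijective _ hbij)]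
  rw [Nat.card_eq_fintype_card, Fintype.card_subtype]

end Alg

/-- In a Dedekind domain with finite nontrivial quotients, for a nonzero ideal
`Q' = P_1^{ν_1} ⋯ P_k^{ν_k}`,
`∑_{H₁ ∣ Q'} ∑_{H₂ ∣ Q'} 2^{ω(H₁ ∩ H₂)}/|H₁ ∩ H₂| ≤ ∏_{i=1}^k (1 + ∑_{ν ≥ 1} (4ν+2)/|P_i|^ν)`,
where `ω(H)` is the number of distinct prime ideal divisors of `H`. -/
theorem stmt11
    (R : Type*) [CommRing R] [IsDedekindDomain R] (hnotfield : ¬ IsField R)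
    (hfin : ∀ I : Ideal R, I ≠ ⊥ → Finite (R ⧸ I))
    (Q' : Ideal R) (hQ' : Q' ≠ ⊥)
    (k : ℕ) (P : Fin k → Ideal R) (ν : Fin k → ℕ)
    (hPprime : ∀ i, (P i).IsPrime ∧ P i ≠ ⊥) (hν : ∀ i, 1 ≤ ν i)
    (hPinj : Function.Injective P)
    (hfact : Q' = ∏ i, P i ^ ν i) :
    (∑ᶠ H₁ ∈ {H : Ideal R | H ∣ Q'}, ∑ᶠ H₂ ∈ {H : Ideal R | H ∣ Q'},
        (2 : ℝ) ^ Nat.card {P' : Ideal R // P'.IsPrime ∧ P' ∣ H₁ ⊓ H₂} /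
          (Nat.card (R ⧸ (H₁ ⊓ H₂)) : ℝ)) ≤
      ∏ i, (1 + ∑' n : ℕ, (4 * ((n : ℝ) + 1) + 2) / (Nat.card (R ⧸ P i) : ℝ) ^ (n + 1)) := by
  classical
  set q : Fin k → ℝ := fun j => (Nat.card (R ⧸ P j) : ℝ) with hqdef
  have hq : ∀ j, (2 : ℝ) ≤ q j := by
    intro j
    have hfinq : Finite (R ⧸ P j) := hfin _ (hPprime j).2
    have h0 : Nat.card (R ⧸ P j) ≠ 0 := Nat.card_pos.ne'
    have h1 : Nat.card (R ⧸ P j) ≠ 1 := by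
      rw [← Submodule.cardQuot_apply, Ne, Submodule.cardQuot_eq_one_iff]
      exact (hPprime j).1.ne_top
    have h2 : 2 ≤ Nat.card (R ⧸ P j) := by omega
    simp only [hqdef]
    exact_mod_cast h2
  have hq0 : ∀ j, (0 : ℝ) < q j := fun j => lt_of_lt_of_le two_pos (hq j)
  set e : (Fin k → ℕ) → Ideal R := fun a => ∏ j, P j ^ a j with he
  set A : Finset (Fin k → ℕ) := Fintype.piFinset fun i => Finset.range (ν i + 1) with hA
  set D : Finset (Ideal R) := A.image e with hDdef
  have hsetD : {H : Ideal R | H ∣ Q'} = ↑D := by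
    ext H
    simp only [Set.mem_setOf_eq, hDdef, Finset.coe_image, Set.mem_image, Finset.mem_coe, hfact]
    constructor
    · intro h
      obtain ⟨a, ha, rfl⟩ := stmt11_div_aux hPprime ν Finset.univ H h
      exact ⟨a, Fintype.mem_piFinset.mpr fun i => Finset.mem_range.mpr (Nat.lt_succ_of_le (ha i)),
        rfl⟩
    · rintro ⟨a, haA, rfl⟩
      have hb : ∀ i, a i ≤ ν i := fun i =>
        Nat.lt_succ_iff.mp (Finset.mem_range.mp (Fintype.mem_piFinset.mp haA i))
      exact Finset.prod_dvd_prod_of_dvd _ _ fun j _ => pow_dvd_pow _ (hb j)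
  have hinjA : ∀ x ∈ A, ∀ y ∈ A, e x = e y → x = y := fun x _ y _ h =>
    stmt11_inj hPprime hPinj h
  -- key term computation
  have hterm : ∀ a b : Fin k → ℕ,
      (2 : ℝ) ^ Nat.card {P' : Ideal R // P'.IsPrime ∧ P' ∣ e a ⊓ e b} /
          (Nat.card (R ⧸ (e a ⊓ e b)) : ℝ)
        = ∏ j, stmt11GridTerm (q j) (max (a j) (b j)) := by
    intro a b
    have hinf : e a ⊓ e b = e (fun j => max (a j) (b j)) := stmt11_inf hPprime hPinj a b
    rw [hinf]
    have hcard : (Nat.card (R ⧸ e (fun j => max (a j) (b j))) : ℝ)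
        = ∏ j, q j ^ max (a j) (b j) := by
      rw [← Submodule.cardQuot_apply, he]
      rw [stmt11_card_aux hPprime hPinj _ Finset.univ]
      push_cast [hqdef]
      rfl
    have homega : Nat.card {P' : Ideal R // P'.IsPrime ∧ P' ∣ e (fun j => max (a j) (b j))}
        = (Finset.univ.filter fun i => max (a i) (b i) ≠ 0).card :=
      stmt11_omega hPprime hPinj _
    rw [hcard, homega]
    have hnum : (2 : ℝ) ^ (Finset.univ.filter fun i => max (a i) (b i) ≠ 0).card
        = ∏ j, (if max (a j) (b j) = 0 then (1 : ℝ) else 2) := by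
      rw [← Finset.prod_const]
      rw [Finset.prod_filter]
      refine Finset.prod_congr rfl fun j _ => ?_
      by_cases h : max (a j) (b j) = 0 <;> simp [h]
    rw [hnum, ← Finset.prod_div_distrib]
    rfl
  -- rewrite the finsums as finset sums and reindex
  rw [hsetD]
  simp only [finsum_mem_coe_finset]
  rw [Finset.sum_image hinjA]
  have hstep : ∀ a : Fin k → ℕ,
      (∑ H₂ ∈ D, (2 : ℝ) ^ Nat.card {P' : Ideal R // P'.IsPrime ∧ P' ∣ e a ⊓ H₂} /
          (Nat.card (R ⧸ (e a ⊓ H₂)) : ℝ))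
        = ∑ b ∈ A, ∏ j, stmt11GridTerm (q j) (max (a j) (b j)) := by
    intro a
    rw [hDdef, Finset.sum_image hinjA]
    exact Finset.sum_congr rfl fun b _ => hterm a b
  calc ∑ a ∈ A, ∑ H₂ ∈ D, (2 : ℝ) ^ Nat.card {P' : Ideal R // P'.IsPrime ∧ P' ∣ e a ⊓ H₂} /
          (Nat.card (R ⧸ (e a ⊓ H₂)) : ℝ)
      = ∑ a ∈ A, ∑ b ∈ A, ∏ j, stmt11GridTerm (q j) (max (a j) (b j)) :=
        Finset.sum_congr rfl fun a _ => hstep a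
    _ = ∏ j, ∑ p ∈ Finset.range (ν j + 1) ×ˢ Finset.range (ν j + 1),
          stmt11GridTerm (q j) (max p.1 p.2) := by
        rw [Finset.prod_univ_sum]
        rw [← Finset.sum_product']
        refine Finset.sum_nbij' (fun p => fun j => (p.1 j, p.2 j))
          (fun x => (fun j => (x j).1, fun j => (x j).2)) ?_ ?_ ?_ ?_ ?_
        · intro p hp
          rw [Finset.mem_product] at hp
          exact Fintype.mem_piFinset.mpr fun j => Finset.mem_product.mpr
            ⟨Fintype.mem_piFinset.mp hp.1 j, Fintype.mem_piFinset.mp hp.2 j⟩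
        · intro x hx
          rw [Finset.mem_product]
          exact ⟨Fintype.mem_piFinset.mpr fun j =>
              (Finset.mem_product.mp (Fintype.mem_piFinset.mp hx j)).1,
            Fintype.mem_piFinset.mpr fun j =>
              (Finset.mem_product.mp (Fintype.mem_piFinset.mp hx j)).2⟩
        · intro p _
          rfl
        · intro x _
          rfl
        · intro p _
          rfl
    _ ≤ ∏ i, (1 + ∑' n : ℕ, (4 * ((n : ℝ) + 1) + 2) / q i ^ (n + 1)) := by
        refine Finset.prod_le_prod (fun j _ => ?_) (fun j _ => ?_)
        · exact Finset.sum_nonneg fun p _ => stmt11_gridTerm_nonneg (hq0 j) _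
        · rw [Finset.sum_product]
          exact stmt11_grid_sum_le (q j) (hq j) (ν j)
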